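/- Let (M,g,∇) be an n-dimensional statistical manifold (n ≥ 4) with dual connection ∇*. Then the conformal-projective curvature tensor W of (M,g,∇) vanishes identically if and only if the conformal-projective curvature tensor W* of the dual statistical manifold (M,g,∇*) vanishes identically. -/

import Mathlib

namespace SM

variable (C : Type*) (V : Type*) [CommRing C] [AddCommGroup V] [Module C V]

/-- Abstract differential-geometric setting: `C` plays the role of the ring
`C^∞(M)` of smooth functions on a manifold `M`, `V` the `C`-module `Γ(TM)` of
smooth vector fields, `D X f` the directional derivative `X f`, and `bracket`
the Lie bracket of vector fields. -/
structure Geo where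
  D : V → C → C
  D_add_left : ∀ (X Y : V) (f : C), D (X + Y) f = D X f + D Y f
  D_smul_left : ∀ (f : C) (X : V) (h : C), D (f • X) h = f * D X h
  D_add_right : ∀ (X : V) (f h : C), D X (f + h) = D X f + D X h
  D_mul : ∀ (X : V) (f h : C), D X (f * h) = f * D X h + h * D X f
  bracket : V → V → V
  bracket_D : ∀ (X Y : V) (f : C), D (bracket X Y) f = D X (D Y f) - D Y (D X f)

variable {C V}

/-- `g` is a Riemannian metric: a symmetric nondegenerate `C`-bilinear form. -/
structure IsMetric (g : V → V → C) : Prop where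
  symm : ∀ X Y, g X Y = g Y X
  add_left : ∀ X Y Z, g (X + Y) Z = g X Z + g Y Z
  smul_left : ∀ (f : C) (X Y : V), g (f • X) Y = f * g X Y
  nondeg : ∀ X, (∀ Y, g X Y = 0) → X = 0

/-- `cd` is an affine connection. -/
structure IsConn (A : Geo C V) (cd : V → V → V) : Prop where
  add_left : ∀ X Y Z, cd (X + Y) Z = cd X Z + cd Y Z
  smul_left : ∀ (f : C) (X Y : V), cd (f • X) Y = f • cd X Y
  add_right : ∀ X Y Z, cd X (Y + Z) = cd X Y + cd X Z
  leibniz : ∀ (X : V) (f : C) (Y : V), cd X (f • Y) = A.D X f • Y + f • cd X Y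

/-- `(g, cd)` is a statistical structure: `cd` is a torsion-free affine
connection and `∇ g` is totally symmetric (Codazzi equation). -/
structure IsStatConn (A : Geo C V) (g : V → V → C) (cd : V → V → V)
    extends IsConn A cd : Prop where
  torsion_free : ∀ X Y, cd X Y - cd Y X = A.bracket X Y
  codazzi : ∀ X Y Z,
    A.D X (g Y Z) - g (cd X Y) Z - g Y (cd X Z)
      = A.D Y (g X Z) - g (cd Y X) Z - g X (cd Y Z)

/-- `cds` is the connection dual to `cd` with respect to `g`:
`X g(Y,Z) = g(∇_X Y, Z) + g(Y, ∇*_X Z)`. -/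
def IsDual (A : Geo C V) (g : V → V → C) (cd cds : V → V → V) : Prop :=
  ∀ X Y Z, A.D X (g Y Z) = g (cd X Y) Z + g Y (cds X Z)

/-- Curvature tensor `R(X,Y)Z = ∇_X ∇_Y Z - ∇_Y ∇_X Z - ∇_[X,Y] Z`. -/
def curv (A : Geo C V) (cd : V → V → V) (X Y Z : V) : V :=
  cd X (cd Y Z) - cd Y (cd X Z) - cd (A.bracket X Y) Z

end SM

namespace SM

variable {C V : Type*} [CommRing C] [Algebra ℝ C] [AddCommGroup V] [Module C V]

/-- Conformal–projective curvature tensor (formula (1.1)), built from the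
curvature `curv A cd`, the Ricci tensors `Ric, Rics` of `∇` and `∇*`, the Ricci
operators `RicS, RicSs`, the scalar curvature `σ'`, and `n = dim M`. -/
noncomputable def cpW (A : Geo C V) (g : V → V → C) (cd : V → V → V)
    (Ric Rics : V → V → C) (RicS RicSs : V →ₗ[C] V) (σ' : C) (n : ℕ)
    (X Y Z : V) : V :=
  curv A cd X Y Z
    + (algebraMap ℝ C (1 / ((n : ℝ) * ((n : ℝ) - 2)))
        * (((n : C) - 1) * Ric X Z + Rics X Z)) • Y
    - (algebraMap ℝ C (1 / ((n : ℝ) * ((n : ℝ) - 2)))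
        * (((n : C) - 1) * Ric Y Z + Rics Y Z)) • X
    + (algebraMap ℝ C (1 / ((n : ℝ) * ((n : ℝ) - 2))) * g X Z)
        • (((n : C) - 1) • RicSs Y + RicS Y)
    - (algebraMap ℝ C (1 / ((n : ℝ) * ((n : ℝ) - 2))) * g Y Z)
        • (((n : C) - 1) • RicSs X + RicS X)
    + (algebraMap ℝ C (1 / (((n : ℝ) - 1) * ((n : ℝ) - 2))) * σ' * g Y Z) • X
    - (algebraMap ℝ C (1 / (((n : ℝ) - 1) * ((n : ℝ) - 2))) * σ' * g X Z) • Y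

/-- The tensor `L(X,Y) = (1/(n-2)) { (1/n)[(n-1)Ric(X,Y) + Ric*(X,Y)]
- (σ/(2(n-1))) g(X,Y) }`. -/
noncomputable def cpL (g : V → V → C) (Ric Rics : V → V → C) (σ' : C) (n : ℕ)
    (X Y : V) : C :=
  algebraMap ℝ C (1 / ((n : ℝ) - 2)) *
    (algebraMap ℝ C (1 / (n : ℝ)) * (((n : C) - 1) * Ric X Y + Rics X Y)
      - algebraMap ℝ C (1 / (2 * ((n : ℝ) - 1))) * σ' * g X Y)

/-- The Weyl conformal curvature tensor of a Riemannian manifold. -/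
noncomputable def weyl (A : Geo C V) (g : V → V → C) (cd : V → V → V)
    (Ric : V → V → C) (RicS : V →ₗ[C] V) (σ' : C) (n : ℕ)
    (X Y Z : V) : V :=
  curv A cd X Y Z
    + (algebraMap ℝ C (1 / ((n : ℝ) - 2)) * Ric X Z) • Y
    - (algebraMap ℝ C (1 / ((n : ℝ) - 2)) * Ric Y Z) • X
    + (algebraMap ℝ C (1 / ((n : ℝ) - 2)) * g X Z) • RicS Y
    - (algebraMap ℝ C (1 / ((n : ℝ) - 2)) * g Y Z) • RicS X
    - (algebraMap ℝ C (1 / (((n : ℝ) - 1) * ((n : ℝ) - 2))) * σ' * g X Z) • Y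
    + (algebraMap ℝ C (1 / (((n : ℝ) - 1) * ((n : ℝ) - 2))) * σ' * g Y Z) • X

end SM

namespace SM

variable {C V : Type*} [CommRing C] [Algebra ℝ C] [AddCommGroup V] [Module C V]

-- metric helpers
theorem IsMetric.zero_left {g : V → V → C} (hg : IsMetric g) (Z : V) : g 0 Z = 0 := by
  have h := hg.smul_left 0 0 Z
  rwa [zero_smul, zero_mul] at h

theorem IsMetric.sub_left {g : V → V → C} (hg : IsMetric g) (X Y Z : V) :
    g (X - Y) Z = g X Z - g Y Z := by
  rw [sub_eq_add_neg, ← neg_one_smul C Y, hg.add_left, hg.smul_left]; ring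

theorem IsMetric.add_right {g : V → V → C} (hg : IsMetric g) (X Y Z : V) :
    g X (Y + Z) = g X Y + g X Z := by
  rw [hg.symm, hg.add_left, hg.symm Y X, hg.symm Z X]

theorem IsMetric.sub_right {g : V → V → C} (hg : IsMetric g) (X Y Z : V) :
    g X (Y - Z) = g X Y - g X Z := by
  rw [hg.symm, hg.sub_left, hg.symm Y X, hg.symm Z X]

/-- `X ↦ g X Z` as a linear map. -/
def IsMetric.gLin {g : V → V → C} (hg : IsMetric g) (Z : V) : V →ₗ[C] C where
  toFun := fun X => g X Z
  map_add' := fun a b => hg.add_left a b Z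
  map_smul' := fun c X => hg.smul_left c X Z

@[simp] theorem IsMetric.gLin_apply {g : V → V → C} (hg : IsMetric g) (Z X : V) :
    hg.gLin Z X = g X Z := rfl

theorem IsDual.symm {A : Geo C V} {g : V → V → C} {cd cds : V → V → V}
    (hg : IsMetric g) (hdual : IsDual A g cd cds) : IsDual A g cds cd := by
  intro X Y Z
  have h := hdual X Z Y
  rw [hg.symm Y Z, h, hg.symm (cd X Z) Y, hg.symm Z (cds X Y)]
  ring

/-- `g(R(X,Y)Z,U) + g(Z, R*(X,Y)U) = 0`. -/
theorem curv_dual {A : Geo C V} {g : V → V → C} {cd cds : V → V → V}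
    (hg : IsMetric g) (hdual : IsDual A g cd cds) (X Y Z U : V) :
    g (curv A cd X Y Z) U + g Z (curv A cds X Y U) = 0 := by
  have h1 : A.D X (A.D Y (g Z U))
      = g (cd X (cd Y Z)) U + g (cd Y Z) (cds X U)
        + (g (cd X Z) (cds Y U) + g Z (cds X (cds Y U))) := by
    rw [hdual Y Z U, A.D_add_right, hdual X (cd Y Z) U, hdual X Z (cds Y U)]
  have h2 : A.D Y (A.D X (g Z U))
      = g (cd Y (cd X Z)) U + g (cd X Z) (cds Y U)
        + (g (cd Y Z) (cds X U) + g Z (cds Y (cds X U))) := by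
    rw [hdual X Z U, A.D_add_right, hdual Y (cd X Z) U, hdual Y Z (cds X U)]
  have h3 : A.D (A.bracket X Y) (g Z U)
      = g (cd (A.bracket X Y) Z) U + g Z (cds (A.bracket X Y) U) := hdual _ _ _
  have h4 : A.D (A.bracket X Y) (g Z U)
      = A.D X (A.D Y (g Z U)) - A.D Y (A.D X (g Z U)) := A.bracket_D X Y _
  simp only [curv, hg.sub_left, hg.sub_right]
  linear_combination h2 + h3 - h1 - h4

theorem trace_smulRight' [Module.Free C V] [Module.Finite C V]
    (c : V →ₗ[C] C) (v : V) :
    LinearMap.trace C V (c.smulRight v) = c v := by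
  have h : c.smulRight v = dualTensorHom C V V (c ⊗ₜ[C] v) := by
    ext x; simp
  rw [h, LinearMap.trace_eq_contract_apply, contractLeft_apply]


theorem aux [Module.Free C V] [Module.Finite C V]
    (A : Geo C V) (g : V → V → C) (cd cds : V → V → V)
    (hn : 4 ≤ Module.finrank C V)
    (hg : IsMetric g) (hdual : IsDual A g cd cds)
    (T : V → V → V →ₗ[C] V)
    (hT : ∀ Y Z X, T Y Z X = curv A cd X Y Z)
    (Ric Rics : V → V → C)
    (hRic : ∀ Y Z, Ric Y Z = LinearMap.trace C V (T Y Z))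
    (RicS RicSs : V →ₗ[C] V)
    (hRicS : ∀ X Y, g (RicS X) Y = Ric X Y)
    (hRicSs : ∀ X Y, g (RicSs X) Y = Rics X Y)
    (σ' σ's : C)
    (hσ : σ' = LinearMap.trace C V RicS)
    (hσs : σ's = LinearMap.trace C V RicSs)
    (hW : ∀ X Y Z : V,
      cpW A g cd Ric Rics RicS RicSs σ' (Module.finrank C V) X Y Z = 0) :
    ∀ X Y Z : V,
      cpW A g cds Rics Ric RicSs RicS σ's (Module.finrank C V) X Y Z = 0 := by
  set n := Module.finrank C V with hnn
  set a : C := algebraMap ℝ C (1 / ((n : ℝ) * ((n : ℝ) - 2))) with ha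
  set b : C := algebraMap ℝ C (1 / (((n : ℝ) - 1) * ((n : ℝ) - 2))) with hb
  set nC : C := (n : C) with hnC
  -- real-number facts
  have h4 : (4 : ℝ) ≤ (n : ℝ) := by exact_mod_cast hn
  have hn0 : (n : ℝ) ≠ 0 := by linarith
  have hn1 : (n : ℝ) - 1 ≠ 0 := by linarith
  have hn2 : (n : ℝ) - 2 ≠ 0 := by linarith
  have e1 : nC = algebraMap ℝ C ((n : ℝ)) := (map_natCast (algebraMap ℝ C) n).symm
  have e2 : nC - 1 = algebraMap ℝ C ((n : ℝ) - 1) := by rw [map_sub, map_one, e1]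
  have e3 : nC - 2 = algebraMap ℝ C ((n : ℝ) - 2) := by
    rw [map_sub, e1, map_ofNat]
  have f1 : a * (nC * (nC - 2)) = 1 := by
    rw [ha, e3, e1, ← map_mul, ← map_mul, ← map_one (algebraMap ℝ C)]
    congr 1
    field_simp
  have f3 : a * nC = b * (nC - 1) := by
    rw [ha, hb, e2, e1, ← map_mul, ← map_mul]
    congr 1
    field_simp
  have f4 : b = algebraMap ℝ C ((n : ℝ) / (((n : ℝ) - 1) ^ 2)) * (a * (nC - 1)) := by
    rw [ha, hb, e2, ← map_mul, ← map_mul]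
    congr 1
    field_simp
  -- trace identity
  have htrace : ∀ Y Z : V, (a * (nC - 1)) * (σ' - σ's) * g Y Z = 0 := by
    intro Y Z
    set L : V →ₗ[C] V :=
      T Y Z
      + (a • ((nC - 1) • (hg.gLin Z ∘ₗ RicS) + hg.gLin Z ∘ₗ RicSs)).smulRight Y
      - (a * ((nC - 1) * Ric Y Z + Rics Y Z)) • LinearMap.id
      + (a • hg.gLin Z).smulRight ((nC - 1) • RicSs Y + RicS Y)
      - (a * g Y Z) • ((nC - 1) • RicSs + RicS)
      + (b * σ' * g Y Z) • LinearMap.id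
      - ((b * σ') • hg.gLin Z).smulRight Y with hL
    have hLapp : ∀ X, L X = cpW A g cd Ric Rics RicS RicSs σ' n X Y Z := by
      intro X
      simp only [hL, cpW, LinearMap.add_apply, LinearMap.sub_apply, LinearMap.smul_apply,
        LinearMap.smulRight_apply, LinearMap.coe_comp, Function.comp_apply,
        LinearMap.id_apply, IsMetric.gLin_apply, hT, hRicS, hRicSs, smul_eq_mul,
        ← ha, ← hb, ← hnC]
    have hL0 : L = 0 := LinearMap.ext fun X => by rw [hLapp]; exact hW X Y Z
    have htr : LinearMap.trace C V L = 0 := by rw [hL0]; exact map_zero _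
    simp only [hL, map_add, map_sub, map_smul, trace_smulRight', LinearMap.trace_id,
      LinearMap.smul_apply, LinearMap.add_apply, LinearMap.coe_comp, Function.comp_apply,
      IsMetric.gLin_apply, smul_eq_mul, hRicS, hRicSs, ← hRic, ← hσ, ← hσs, ← hnC,
      map_natCast] at htr
    linear_combination htr + Ric Y Z * f1 + σ' * g Y Z * f3
  have hbs : ∀ Y Z : V, b * (σ' - σ's) * g Y Z = 0 := by
    intro Y Z
    have h := htrace Y Z
    linear_combination (algebraMap ℝ C ((n : ℝ) / (((n : ℝ) - 1) ^ 2))) * h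
      + (σ' - σ's) * g Y Z * f4
  have hpair : ∀ X Y Z U : V,
      g (cpW A g cd Ric Rics RicS RicSs σ' n X Y Z) U
        + g (cpW A g cds Rics Ric RicSs RicS σ's n X Y U) Z
      = b * (σ' - σ's) * (g Y Z * g X U - g X Z * g Y U) := by
    intro X Y Z U
    have hc := curv_dual hg hdual X Y Z U
    have hsymm := hg.symm (curv A cds X Y U) Z
    simp only [cpW, hg.add_left, hg.sub_left, hg.smul_left, hRicS, hRicSs, ← ha, ← hb, ← hnC]
    linear_combination hc + hsymm
  intro X Y U
  apply hg.nondeg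
  intro Z
  have hp := hpair X Y Z U
  have h0 : g (cpW A g cd Ric Rics RicS RicSs σ' n X Y Z) U = 0 := by
    rw [hW X Y Z]; exact hg.zero_left U
  linear_combination hp - h0 + g X U * hbs Y Z - g Y U * hbs X Z


end SM

/-- The conformal-projective curvature tensor `W` of `(M,g,∇)` vanishes
identically iff the conformal-projective curvature tensor `W*` of the dual
statistical manifold `(M,g,∇*)` vanishes identically. -/
theorem stmt4 {C V : Type*} [CommRing C] [Algebra ℝ C] [AddCommGroup V]
    [Module C V] [Module.Free C V] [Module.Finite C V]
    (A : SM.Geo C V) (g : V → V → C) (cd cds : V → V → V)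
    (hn : 4 ≤ Module.finrank C V)
    (hg : SM.IsMetric g) (hstat : SM.IsStatConn A g cd)
    (hconn : SM.IsConn A cds) (hdual : SM.IsDual A g cd cds)
    (T Ts : V → V → V →ₗ[C] V)
    (hT : ∀ Y Z X, T Y Z X = SM.curv A cd X Y Z)
    (hTs : ∀ Y Z X, Ts Y Z X = SM.curv A cds X Y Z)
    (Ric Rics : V → V → C)
    (hRic : ∀ Y Z, Ric Y Z = LinearMap.trace C V (T Y Z))
    (hRics : ∀ Y Z, Rics Y Z = LinearMap.trace C V (Ts Y Z))
    (RicS RicSs : V →ₗ[C] V)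
    (hRicS : ∀ X Y, g (RicS X) Y = Ric X Y)
    (hRicSs : ∀ X Y, g (RicSs X) Y = Rics X Y)
    (σ' σ's : C)
    (hσ : σ' = LinearMap.trace C V RicS)
    (hσs : σ's = LinearMap.trace C V RicSs)
    :
    (∀ X Y Z : V,
      SM.cpW A g cd Ric Rics RicS RicSs σ' (Module.finrank C V) X Y Z = 0)
    ↔ (∀ X Y Z : V,
      SM.cpW A g cds Rics Ric RicSs RicS σ's (Module.finrank C V) X Y Z = 0) := by
  constructor
  · intro hW
    exact SM.aux A g cd cds hn hg hdual T hT Ric Rics hRic RicS RicSs hRicS hRicSs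
      σ' σ's hσ hσs hW
  · intro hW
    exact SM.aux A g cds cd hn hg (SM.IsDual.symm hg hdual) Ts hTs Rics Ric hRics
      RicSs RicS hRicSs hRicS σ's σ' hσs hσ hW
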